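/- arXiv:1412.3264 — 4 statements merged into one kernel-verified Lean document; each statement's English description precedes it below -/
import Mathlib

section
/- For the Hadamard walk started from φ = ᵀ[α, β] with α, β ∈ ℍ, |α|² + |β|² = 1, the time-3 distribution is symmetric (P(X₃ = x) = P(X₃ = −x) for all x) if and only if Re(α·β̄) = 0 and |α| = |β| = 1/√2. In particular, no real initial state (α, β ∈ ℝ) gives a symmetric time-3 distribution. -/
open Quaternion Matrix

/-- one step of the quaternionic quantum walk on ℤ -/
noncomputable def step (P Q : Matrix (Fin 2) (Fin 2) ℍ[ℝ]) (Ψ : ℤ → Fin 2 → ℍ[ℝ]) :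
    ℤ → Fin 2 → ℍ[ℝ] :=
  fun x => P.mulVec (Ψ (x + 1)) + Q.mulVec (Ψ (x - 1))

/-- probability of finding the walker at position x at time n -/
noncomputable def prob (P Q : Matrix (Fin 2) (Fin 2) ℍ[ℝ]) (Ψ₀ : ℤ → Fin 2 → ℍ[ℝ])
    (n : ℕ) (x : ℤ) : ℝ :=
  ‖(step P Q)^[n] Ψ₀ x 0‖ ^ 2 + ‖(step P Q)^[n] Ψ₀ x 1‖ ^ 2

noncomputable def r : ℍ[ℝ] := (((Real.sqrt 2)⁻¹ : ℝ) : ℍ[ℝ])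

noncomputable def PH : Matrix (Fin 2) (Fin 2) ℍ[ℝ] := !![r, r; 0, 0]
noncomputable def QH : Matrix (Fin 2) (Fin 2) ℍ[ℝ] := !![0, 0; r, -r]

noncomputable def φ₀ (α β : ℍ[ℝ]) : ℤ → Fin 2 → ℍ[ℝ] :=
  fun x => if x = 0 then ![α, β] else 0

/- auxiliary -/

lemma Pv (v : Fin 2 → ℍ[ℝ]) : PH.mulVec v = ![r*(v 0 + v 1), 0] := by
  funext i
  fin_cases i <;> simp [PH, Matrix.mulVec, dotProduct, Fin.sum_univ_two, mul_add]

lemma Qv (v : Fin 2 → ℍ[ℝ]) : QH.mulVec v = ![0, r*(v 0 - v 1)] := by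
  funext i
  fin_cases i <;>
    simp [QH, Matrix.mulVec, dotProduct, Fin.sum_univ_two, mul_add, mul_neg, sub_eq_add_neg]

noncomputable def Ψ1 (α β : ℍ[ℝ]) : ℤ → Fin 2 → ℍ[ℝ] := fun x =>
  if x = -1 then ![r*(α+β), 0] else if x = 1 then ![0, r*(α-β)] else 0

noncomputable def Ψ2 (α β : ℍ[ℝ]) : ℤ → Fin 2 → ℍ[ℝ] := fun x =>
  if x = -2 then ![r^2*(α+β), 0] else if x = 0 then ![r^2*(α-β), r^2*(α+β)]
  else if x = 2 then ![0, -(r^2*(α-β))] else 0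

noncomputable def Ψ3 (α β : ℍ[ℝ]) : ℤ → Fin 2 → ℍ[ℝ] := fun x =>
  if x = -3 then ![r^3*(α+β), 0] else if x = -1 then ![2*(r^3*α), r^3*(α+β)]
  else if x = 1 then ![-(r^3*(α-β)), -(2*(r^3*β))] else if x = 3 then ![0, r^3*(α-β)] else 0

lemma step1 (α β : ℍ[ℝ]) : step PH QH (φ₀ α β) = Ψ1 α β := by
  funext x
  by_cases h1 : x = -1
  · subst h1; simp only [step, φ₀, Ψ1, Pv, Qv]; norm_num
  by_cases h2 : x = 1
  · subst h2; simp only [step, φ₀, Ψ1, Pv, Qv]; norm_num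
  · simp only [step, φ₀, Ψ1, if_neg h1, if_neg h2,
      if_neg (show x + 1 ≠ 0 by omega), if_neg (show x - 1 ≠ 0 by omega),
      Matrix.mulVec_zero, add_zero]

lemma step2 (α β : ℍ[ℝ]) : step PH QH (Ψ1 α β) = Ψ2 α β := by
  funext x
  by_cases h1 : x = -2
  · subst h1; simp only [step, Ψ1, Ψ2, Pv, Qv]; norm_num
    noncomm_ring
  by_cases h2 : x = 0
  · subst h2; simp only [step, Ψ1, Ψ2, Pv, Qv]; norm_num
    constructor <;> noncomm_ring
  by_cases h3 : x = 2
  · subst h3; simp only [step, Ψ1, Ψ2, Pv, Qv]; norm_num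
    noncomm_ring
  · simp only [step, Ψ1, Ψ2, if_neg h1, if_neg h2, if_neg h3,
      if_neg (show x + 1 ≠ -1 by omega), if_neg (show x + 1 ≠ 1 by omega),
      if_neg (show x - 1 ≠ -1 by omega), if_neg (show x - 1 ≠ 1 by omega),
      Matrix.mulVec_zero, add_zero]

lemma step3 (α β : ℍ[ℝ]) : step PH QH (Ψ2 α β) = Ψ3 α β := by
  funext x
  by_cases h1 : x = -3
  · subst h1; simp only [step, Ψ2, Ψ3, Pv, Qv]; norm_num
    noncomm_ring
  by_cases h2 : x = -1
  · subst h2; simp only [step, Ψ2, Ψ3, Pv, Qv]; norm_num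
    constructor <;> noncomm_ring
  by_cases h3 : x = 1
  · subst h3; simp only [step, Ψ2, Ψ3, Pv, Qv]; norm_num
    constructor <;> noncomm_ring
  by_cases h4 : x = 3
  · subst h4; simp only [step, Ψ2, Ψ3, Pv, Qv]; norm_num
    noncomm_ring
  · simp only [step, Ψ2, Ψ3, if_neg h1, if_neg h2, if_neg h3, if_neg h4,
      if_neg (show x + 1 ≠ -2 by omega), if_neg (show x + 1 ≠ 0 by omega),
      if_neg (show x + 1 ≠ 2 by omega), if_neg (show x - 1 ≠ -2 by omega),
      if_neg (show x - 1 ≠ 0 by omega), if_neg (show x - 1 ≠ 2 by omega),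
      Matrix.mulVec_zero, add_zero]

lemma iter3 (α β : ℍ[ℝ]) : (step PH QH)^[3] (φ₀ α β) = Ψ3 α β := by
  show step PH QH (step PH QH (step PH QH (φ₀ α β))) = _
  rw [step1, step2, step3]

lemma hr2 : ‖r‖^2 = 1/2 := by
  rw [r, Quaternion.norm_coe, Real.norm_eq_abs, abs_of_nonneg (by positivity), inv_pow,
    Real.sq_sqrt (by norm_num)]; norm_num

lemma hr6 : (‖r‖^3)^2 = 1/8 := by
  rw [← pow_mul, show (3*2 : ℕ) = 2*3 by rfl, pow_mul, hr2]; norm_num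

lemma hr6' : ‖r‖^6 = 1/8 := by
  have := hr6; rwa [← pow_mul] at this

lemma norm_two : ‖(2:ℍ[ℝ])‖ = 2 := by
  rw [show (2:ℍ[ℝ]) = (((2:ℝ)):ℍ[ℝ]) by norm_cast, Quaternion.norm_coe]; norm_num



lemma prob3 (α β : ℍ[ℝ]) (x : ℤ) : prob PH QH (φ₀ α β) 3 x =
    if x = -3 then (1/8)*‖α+β‖^2
    else if x = -1 then (1/8)*(4*‖α‖^2 + ‖α+β‖^2)
    else if x = 1 then (1/8)*(‖α-β‖^2 + 4*‖β‖^2)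
    else if x = 3 then (1/8)*‖α-β‖^2
    else 0 := by
  rw [prob, iter3]
  by_cases h1 : x = -3
  · subst h1; simp only [Ψ3]; norm_num
    rw [mul_pow, hr6]
  by_cases h2 : x = -1
  · subst h2; simp only [Ψ3]; norm_num
    rw [norm_two, mul_pow, mul_pow, mul_pow, hr6]; all_goals ring
  by_cases h3 : x = 1
  · subst h3; simp only [Ψ3]; norm_num
    rw [norm_two, mul_pow, mul_pow, mul_pow, hr6]; all_goals ring
  by_cases h4 : x = 3
  · subst h4; simp only [Ψ3]; norm_num [h1, h2, h3]
    rw [mul_pow, hr6]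
  · simp [Ψ3, h1, h2, h3, h4]

lemma norm_add_sq' (α β : ℍ[ℝ]) : ‖α+β‖^2 = ‖α‖^2 + ‖β‖^2 + 2*(α*star β).re := by
  have h := Quaternion.normSq_add α β
  simp only [Quaternion.normSq_eq_norm_mul_self, ← sq] at h
  linarith

lemma norm_sub_sq' (α β : ℍ[ℝ]) : ‖α-β‖^2 = ‖α‖^2 + ‖β‖^2 - 2*(α*star β).re := by
  have h := Quaternion.normSq_add α (-β)
  simp only [Quaternion.normSq_eq_norm_mul_self, ← sq, star_neg, mul_neg, Quaternion.re_neg,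
    norm_neg, ← sub_eq_add_neg] at h
  linarith

theorem hadamard_time_three_symmetric :
    (∀ α β : ℍ[ℝ], ‖α‖ ^ 2 + ‖β‖ ^ 2 = 1 →
      ((∀ x : ℤ, prob PH QH (φ₀ α β) 3 x = prob PH QH (φ₀ α β) 3 (-x)) ↔
        ((α * star β).re = 0 ∧ ‖α‖ = (Real.sqrt 2)⁻¹ ∧ ‖β‖ = (Real.sqrt 2)⁻¹))) ∧
    (∀ a b : ℝ, a ^ 2 + b ^ 2 = 1 →
      ¬ (∀ x : ℤ, prob PH QH (φ₀ ((a : ℍ[ℝ])) ((b : ℍ[ℝ]))) 3 x =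
          prob PH QH (φ₀ ((a : ℍ[ℝ])) ((b : ℍ[ℝ]))) 3 (-x)) ) := by
  have hmain : ∀ α β : ℍ[ℝ], ‖α‖ ^ 2 + ‖β‖ ^ 2 = 1 →
      ((∀ x : ℤ, prob PH QH (φ₀ α β) 3 x = prob PH QH (φ₀ α β) 3 (-x)) ↔
        ((α * star β).re = 0 ∧ ‖α‖ = (Real.sqrt 2)⁻¹ ∧ ‖β‖ = (Real.sqrt 2)⁻¹)) := by
    intro α β hn
    have hadd := norm_add_sq' α β
    have hsub := norm_sub_sq' α β
    have hc : ((Real.sqrt 2)⁻¹ : ℝ)^2 = 1/2 := by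
      rw [inv_pow, Real.sq_sqrt (by norm_num)]; norm_num
    have hq : ∀ u v : ℝ, 0 ≤ u → 0 ≤ v → u^2 = v^2 → u = v := by
      intro u v hu hv h
      rw [← Real.sqrt_sq hu, ← Real.sqrt_sq hv, h]
    constructor
    · intro hsym
      have e3 := hsym 3
      have e1 := hsym 1
      rw [prob3, prob3] at e3 e1
      rw [if_neg (by norm_num), if_neg (by norm_num), if_neg (by norm_num), if_pos rfl,
        show -(3:ℤ) = -3 by norm_num, if_pos rfl] at e3
      rw [if_neg (by norm_num), if_neg (by norm_num), if_pos rfl,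
        show -(1:ℤ) = -1 by norm_num, if_neg (by norm_num), if_pos rfl] at e1
      have hR : (α * star β).re = 0 := by linarith
      have hA : ‖α‖^2 = 1/2 := by linarith
      have hB : ‖β‖^2 = 1/2 := by linarith
      refine ⟨hR, ?_, ?_⟩
      · exact hq _ _ (norm_nonneg α) (by positivity) (by rw [hA, hc])
      · exact hq _ _ (norm_nonneg β) (by positivity) (by rw [hB, hc])
    · rintro ⟨hR, hα, hβ⟩ x
      have hA : ‖α‖^2 = 1/2 := by rw [hα, hc]
      have hB : ‖β‖^2 = 1/2 := by rw [hβ, hc]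
      rw [prob3, prob3]
      by_cases h1 : x = -3
      · subst h1
        rw [if_pos rfl, show -(-3:ℤ) = 3 by norm_num, if_neg (by norm_num),
          if_neg (by norm_num), if_neg (by norm_num), if_pos rfl]
        linarith
      by_cases h2 : x = -1
      · subst h2
        rw [if_pos rfl, if_neg (by norm_num), show -(-1:ℤ) = 1 by norm_num,
          if_neg (by norm_num), if_neg (by norm_num), if_pos rfl]
        linarith
      by_cases h3 : x = 1
      · subst h3
        rw [if_neg (by norm_num), if_neg (by norm_num), if_pos rfl,
          show -(1:ℤ) = -1 by norm_num, if_neg (by norm_num), if_pos rfl]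
        linarith
      by_cases h4 : x = 3
      · subst h4
        rw [if_neg (by norm_num), if_neg (by norm_num), if_neg (by norm_num), if_pos rfl,
          show -(3:ℤ) = -3 by norm_num, if_pos rfl]
        linarith
      · rw [if_neg h1, if_neg h2, if_neg h3, if_neg h4,
          if_neg (show -x ≠ -3 by omega), if_neg (show -x ≠ -1 by omega),
          if_neg (show -x ≠ 1 by omega), if_neg (show -x ≠ 3 by omega)]
  refine ⟨hmain, ?_⟩
  intro a b hab hsym
  have hn : ‖((a:ℍ[ℝ]))‖ ^ 2 + ‖((b:ℍ[ℝ]))‖ ^ 2 = 1 := by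
    rw [Quaternion.norm_coe, Quaternion.norm_coe, Real.norm_eq_abs, Real.norm_eq_abs,
      sq_abs, sq_abs]; exact hab
  obtain ⟨hR, hα, hβ⟩ := (hmain _ _ hn).mp hsym
  have hab' : a * b = 0 := by
    simpa [Quaternion.star_coe, ← Quaternion.coe_mul] using hR
  have ha : a ≠ 0 := by
    intro h; rw [h] at hα; simp at hα
    have : Real.sqrt 2 ≠ 0 := by positivity
    exact this hα.symm
  have hb : b ≠ 0 := by
    intro h; rw [h] at hβ; simp at hβ
    have : Real.sqrt 2 ≠ 0 := by positivity
    exact this hβ.symm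
  rcases mul_eq_zero.mp hab' with h | h
  · exact ha h
  · exact hb h
end

section
/- Let U = [0 1; 1 0] and consider the associated quaternionic quantum walk on ℤ. Define Ψ by: for each x ∈ ℤ, Ψᴸ(2x) = α_{2x}, Ψᴿ(2x) = β_{2x}, Ψᴸ(2x−1) = β_{2x}·λ, Ψᴿ(2x+1) = α_{2x}·λ, where λ ∈ {1, −1} and α_{2x}, β_{2x} ∈ ℍ. Then the walk operator U^(s) satisfies U^(s)Ψ = Ψλ, i.e., Ψ is a right eigenvector with eigenvalue λ. -/
open Quaternion Matrix

theorem flip_walk_right_eigenvector (lam : ℍ[ℝ]) (hlam : lam = 1 ∨ lam = -1)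
    (α β : ℤ → ℍ[ℝ]) (Ψ : ℤ → Fin 2 → ℍ[ℝ])
    (hL : ∀ x : ℤ, Ψ (2 * x) 0 = α x)
    (hR : ∀ x : ℤ, Ψ (2 * x) 1 = β x)
    (hLodd : ∀ x : ℤ, Ψ (2 * x - 1) 0 = β x * lam)
    (hRodd : ∀ x : ℤ, Ψ (2 * x + 1) 1 = α x * lam) :
    step !![0, 1; 0, 0] !![0, 0; 1, 0] Ψ = fun x i => Ψ x i * lam := by
  have hlam2 : lam * lam = 1 := by rcases hlam with h | h <;> simp [h]
  have e0 : ∀ x : ℤ, step !![0, 1; 0, 0] !![0, 0; 1, 0] Ψ x 0 = Ψ (x + 1) 1 := by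
    intro x; simp [step, mulVec, dotProduct, Fin.sum_univ_two]
  have e1 : ∀ x : ℤ, step !![0, 1; 0, 0] !![0, 0; 1, 0] Ψ x 1 = Ψ (x - 1) 0 := by
    intro x; simp [step, mulVec, dotProduct, Fin.sum_univ_two]
  funext x i
  fin_cases i
  · show step !![0, 1; 0, 0] !![0, 0; 1, 0] Ψ x 0 = Ψ x 0 * lam
    rw [e0]
    rcases Int.even_or_odd x with ⟨k, hk⟩ | ⟨k, hk⟩
    · rw [hk, show k + k + 1 = 2 * k + 1 by ring, hRodd k,
        show k + k = 2 * k by ring, hL k]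
    · rw [hk, show 2 * k + 1 + 1 = 2 * (k + 1) by ring, hR (k + 1),
        show 2 * k + 1 = 2 * (k + 1) - 1 by ring, hLodd (k + 1),
        mul_assoc, hlam2, mul_one]
  · show step !![0, 1; 0, 0] !![0, 0; 1, 0] Ψ x 1 = Ψ x 1 * lam
    rw [e1]
    rcases Int.even_or_odd x with ⟨k, hk⟩ | ⟨k, hk⟩
    · rw [hk, show k + k - 1 = 2 * k - 1 by ring, hLodd k,
        show k + k = 2 * k by ring, hR k]
    · rw [hk, show 2 * k + 1 - 1 = 2 * k by ring, hL k, hRodd k,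
        mul_assoc, hlam2, mul_one]
end

section
/- Let U = [0 1; −1 0] and consider the associated quaternionic quantum walk on ℤ. For any purely imaginary unit quaternion λ = x₁i + x₂j + x₃k with x₁² + x₂² + x₃² = 1, the state Ψ defined by Ψᴸ(2x) = α_{2x}, Ψᴿ(2x) = β_{2x}, Ψᴸ(2x−1) = −β_{2x}·λ, Ψᴿ(2x+1) = α_{2x}·λ satisfies U^(s)Ψ = Ψλ. -/
open Quaternion Matrix

lemma pure_unit_sq (lam : ℍ[ℝ]) (hre : lam.re = 0)
    (hnorm : lam.imI ^ 2 + lam.imJ ^ 2 + lam.imK ^ 2 = 1) : lam * lam = -1 := by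
  ext <;> simp [Quaternion.re_mul, Quaternion.imI_mul, Quaternion.imJ_mul,
    Quaternion.imK_mul, hre] <;> nlinarith [hnorm]

theorem rotation_walk_right_eigenvector (lam : ℍ[ℝ])
    (hre : lam.re = 0) (hnorm : lam.imI ^ 2 + lam.imJ ^ 2 + lam.imK ^ 2 = 1)
    (α β : ℤ → ℍ[ℝ]) (Ψ : ℤ → Fin 2 → ℍ[ℝ])
    (hL : ∀ x : ℤ, Ψ (2 * x) 0 = α x)
    (hR : ∀ x : ℤ, Ψ (2 * x) 1 = β x)
    (hLodd : ∀ x : ℤ, Ψ (2 * x - 1) 0 = -(β x * lam))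
    (hRodd : ∀ x : ℤ, Ψ (2 * x + 1) 1 = α x * lam) :
    step !![0, 1; 0, 0] !![0, 0; -1, 0] Ψ = fun x i => Ψ x i * lam := by
  have hl2 := pure_unit_sq lam hre hnorm
  funext x i
  rcases Int.even_or_odd x with ⟨y, hy⟩ | ⟨y, hy⟩
  · subst hy
    fin_cases i <;>
      simp [step, Matrix.mulVec, dotProduct, Fin.sum_univ_two, ← two_mul]
    · have h1 : (2 : ℤ) * y + 1 = 2 * y + 1 := by ring
      rw [h1, hRodd, hL]
    · have h1 : (2 : ℤ) * y - 1 = 2 * y - 1 := by ring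
      rw [h1, hLodd, hR, neg_neg]
  · subst hy
    fin_cases i <;>
      simp [step, Matrix.mulVec, dotProduct, Fin.sum_univ_two]
    · have h1 : (2 : ℤ) * y + 1 + 1 = 2 * (y + 1) := by ring
      have h2 : (2 : ℤ) * y + 1 = 2 * (y + 1) - 1 := by ring
      rw [h1, hR, h2, hLodd, neg_mul, mul_assoc, hl2, mul_neg_one, neg_neg]
    · rw [hL, hRodd, mul_assoc, hl2, mul_neg_one]
end

section
/- Let U be a 2×2 real unitary (orthogonal) matrix defining a quantum walk on ℤ, and let φ = ᵀ[α, β] ∈ ℍ² with |α|² + |β|² = 1 be a quaternionic initial state at the origin. Then there exists a complex initial state φ̃ = ᵀ[α̃, β̃] ∈ ℂ² with |α̃|² + |β̃|² = 1 such that P(Xₙ^φ = x) = P(Xₙ^{φ̃} = x) for all n ≥ 0 and x ∈ ℤ. -/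
open Quaternion Matrix

/-- the standard embedding of ℂ into the quaternions -/
noncomputable def toQ (z : ℂ) : ℍ[ℝ] := ⟨z.re, z.im, 0, 0⟩

open RealInnerProductSpace

/-- the corresponding real (coefficient) walk -/
noncomputable def stepR (a b c d : ℝ) (Ψ : ℤ → Fin 2 → ℝ) : ℤ → Fin 2 → ℝ :=
  fun x => (!![a, b; 0, 0]).mulVec (Ψ (x + 1)) + (!![0, 0; c, d]).mulVec (Ψ (x - 1))

lemma step_combo (a b c d : ℝ) (α β : ℍ[ℝ]) (r s : ℤ → Fin 2 → ℝ) :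
    step !![(a : ℍ[ℝ]), (b : ℍ[ℝ]); 0, 0] !![0, 0; (c : ℍ[ℝ]), (d : ℍ[ℝ])]
      (fun x i => (r x i : ℍ[ℝ]) * α + (s x i : ℍ[ℝ]) * β)
    = fun x i => ((stepR a b c d r) x i : ℍ[ℝ]) * α + ((stepR a b c d s) x i : ℍ[ℝ]) * β := by
  funext x i
  fin_cases i <;>
    simp [step, stepR, mulVec, dotProduct, Fin.sum_univ_two, mul_add, add_mul, ← mul_assoc] <;>
    ring_nf <;> abel

lemma iterate_combo (a b c d : ℝ) (α β : ℍ[ℝ]) (r s : ℤ → Fin 2 → ℝ) (n : ℕ) :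
    (step !![(a : ℍ[ℝ]), (b : ℍ[ℝ]); 0, 0] !![0, 0; (c : ℍ[ℝ]), (d : ℍ[ℝ])])^[n]
      (fun x i => (r x i : ℍ[ℝ]) * α + (s x i : ℍ[ℝ]) * β)
    = fun x i => (((stepR a b c d)^[n] r) x i : ℍ[ℝ]) * α
        + (((stepR a b c d)^[n] s) x i : ℍ[ℝ]) * β := by
  induction n generalizing r s with
  | zero => simp
  | succ n ih =>
    rw [Function.iterate_succ_apply, Function.iterate_succ_apply,
      Function.iterate_succ_apply, step_combo, ih]

lemma norm_combo_sq (r s : ℝ) (α β : ℍ[ℝ]) :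
    ‖(r : ℍ[ℝ]) * α + (s : ℍ[ℝ]) * β‖ ^ 2
      = r ^ 2 * ‖α‖ ^ 2 + s ^ 2 * ‖β‖ ^ 2 + 2 * r * s * ⟪α, β⟫ := by
  rw [Quaternion.coe_mul_eq_smul, Quaternion.coe_mul_eq_smul,
    norm_add_sq_real, real_inner_smul_left, real_inner_smul_right, norm_smul, norm_smul]
  simp only [mul_pow, Real.norm_eq_abs, sq_abs]
  ring

lemma norm_toQ_sq (z : ℂ) : ‖toQ z‖ ^ 2 = ‖z‖ ^ 2 := by
  have h1 : ‖toQ z‖ ^ 2 = ⟪toQ z, toQ z⟫ := (real_inner_self_eq_norm_sq _).symm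
  rw [h1, Quaternion.inner_self, Quaternion.normSq_def', Complex.sq_norm,
    Complex.normSq_apply]
  show z.re ^ 2 + z.im ^ 2 + 0 ^ 2 + 0 ^ 2 = _
  ring

lemma inner_toQ (z w : ℂ) : ⟪toQ z, toQ w⟫ = z.re * w.re + z.im * w.im := by
  simp only [Quaternion.inner_def, Quaternion.re_mul, Quaternion.re_star, Quaternion.imI_star]
  simp [toQ]

lemma phi_combo (α β : ℍ[ℝ]) :
    φ₀ α β = fun x i => (((fun y => if y = 0 then ![(1:ℝ), 0] else 0) x i : ℝ) : ℍ[ℝ]) * α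
      + (((fun y => if y = 0 then ![(0:ℝ), 1] else 0) x i : ℝ) : ℍ[ℝ]) * β := by
  funext x i
  by_cases hx : x = 0 <;> fin_cases i <;> simp [φ₀, hx]

/-- the probability depends only on the three real invariants of (α, β) -/
lemma prob_formula (a b c d : ℝ) (α β : ℍ[ℝ]) (n : ℕ) (x : ℤ) :
    prob !![(a : ℍ[ℝ]), (b : ℍ[ℝ]); 0, 0] !![0, 0; (c : ℍ[ℝ]), (d : ℍ[ℝ])] (φ₀ α β) n x
      = (let f := (stepR a b c d)^[n] (fun y => if y = 0 then ![(1:ℝ), 0] else 0) x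
         let g := (stepR a b c d)^[n] (fun y => if y = 0 then ![(0:ℝ), 1] else 0) x
         (f 0 ^ 2 + f 1 ^ 2) * ‖α‖ ^ 2 + (g 0 ^ 2 + g 1 ^ 2) * ‖β‖ ^ 2
           + 2 * (f 0 * g 0 + f 1 * g 1) * ⟪α, β⟫) := by
  rw [prob, phi_combo, iterate_combo]
  simp only [norm_combo_sq]
  ring

theorem real_coin_quaternion_reduces_to_complex (a b c d : ℝ)
    (hU : (!![a, b; c, d] : Matrix (Fin 2) (Fin 2) ℝ) * (!![a, b; c, d])ᵀ = 1)
    (α β : ℍ[ℝ]) (h : ‖α‖ ^ 2 + ‖β‖ ^ 2 = 1) :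
    ∃ α' β' : ℂ, ‖α'‖ ^ 2 + ‖β'‖ ^ 2 = 1 ∧
      ∀ (n : ℕ) (x : ℤ),
        prob !![(a : ℍ[ℝ]), (b : ℍ[ℝ]); 0, 0] !![0, 0; (c : ℍ[ℝ]), (d : ℍ[ℝ])] (φ₀ α β) n x =
        prob !![(a : ℍ[ℝ]), (b : ℍ[ℝ]); 0, 0] !![0, 0; (c : ℍ[ℝ]), (d : ℍ[ℝ])]
          (φ₀ (toQ α') (toQ β')) n x := by
  -- it suffices to match the three invariants
  suffices hmain : ∃ α' β' : ℂ, ‖α'‖ ^ 2 = ‖α‖ ^ 2 ∧ ‖β'‖ ^ 2 = ‖β‖ ^ 2 ∧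
      ⟪toQ α', toQ β'⟫ = ⟪α, β⟫ by
    obtain ⟨α', β', h1, h2, h3⟩ := hmain
    refine ⟨α', β', by rw [h1, h2]; exact h, fun n x => ?_⟩
    rw [prob_formula, prob_formula, norm_toQ_sq, norm_toQ_sq, h1, h2, h3]
  by_cases hα : α = 0
  · refine ⟨0, (‖β‖ : ℂ), by simp [hα], ?_, by simp only [Quaternion.inner_def, Quaternion.re_mul]; simp [hα, toQ]⟩
    rw [Complex.norm_real, Real.norm_eq_abs, sq_abs]
  · have hA : ‖α‖ ≠ 0 := norm_ne_zero_iff.mpr hα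
    set A := ‖α‖ with hAdef
    set B := ‖β‖ with hBdef
    set J : ℝ := ⟪α, β⟫ with hJdef
    have hCS : |J| ≤ A * B := abs_real_inner_le_norm α β
    set t : ℝ := J / A with htdef
    have ht2 : t ^ 2 ≤ B ^ 2 := by
      rw [htdef, div_pow]
      rw [div_le_iff₀ (by positivity)]
      calc J ^ 2 = |J| ^ 2 := (sq_abs J).symm
        _ ≤ (A * B) ^ 2 := by
            apply pow_le_pow_left₀ (abs_nonneg J) hCS
        _ = B ^ 2 * A ^ 2 := by ring
    refine ⟨(A : ℂ), ⟨t, Real.sqrt (B ^ 2 - t ^ 2)⟩, ?_, ?_, ?_⟩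
    · rw [Complex.norm_real, Real.norm_eq_abs, sq_abs]
    · have : ‖(⟨t, Real.sqrt (B ^ 2 - t ^ 2)⟩ : ℂ)‖ ^ 2
          = t ^ 2 + Real.sqrt (B ^ 2 - t ^ 2) ^ 2 := by
        rw [Complex.sq_norm, Complex.normSq_mk]
        ring
      rw [this, Real.sq_sqrt (sub_nonneg.mpr ht2)]
      ring
    · rw [inner_toQ]
      simp only [Complex.ofReal_re, Complex.ofReal_im]
      rw [zero_mul, add_zero, htdef, mul_div_cancel₀ J hA]
end
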